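/- Let V be finite with distinct positions h and distinct capacities c, and let u* be the node of maximum capacity. Then for every node u with h(u) < h(u*), iterating succ⁺₁ from u reaches u* in at most |S⁺(u)| steps; symmetrically every node right of u* reaches u* by iterating pred⁺₁. Hence any two nodes are connected in the CONE graph by a path of length at most |S⁺(u)| + |P⁺(v)| + 2 through u*. -/

import Mathlib

/-- `IsSucc h c u v` means `v = succ⁺₁(u)`. -/
def IsSucc {V : Type*} (h c : V → ℝ) (u v : V) : Prop :=
  h u < h v ∧ c u < c v ∧ ∀ w, h u < h w → c u < c w → h v ≤ h w

/-- `IsPred h c v u` means `u = pred⁺₁(v)`. -/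
def IsPred {V : Type*} (h c : V → ℝ) (v u : V) : Prop :=
  h u < h v ∧ c v < c u ∧ ∀ w, h w < h v → c v < c w → h w ≤ h u

/-- The (undirected) CONE graph: `u ~ v` iff `v ∈ S⁺(u) ∪ P⁺(u) ∪ S⁻(u) ∪ P⁻(u)`. -/
def coneGraph {V : Type*} (h c : V → ℝ) : SimpleGraph V where
  Adj u v := u ≠ v ∧ (Relation.TransGen (IsSucc h c) u v ∨
    Relation.TransGen (IsSucc h c) v u ∨
    Relation.TransGen (IsPred h c) u v ∨
    Relation.TransGen (IsPred h c) v u)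
  symm := by
    constructor
    rintro a b ⟨hne, hr⟩
    exact ⟨hne.symm, by tauto⟩
  loopless := by
    constructor
    rintro a ⟨hne, -⟩
    exact hne rfl


lemma succ_chain_aux {V : Type*} [Fintype V]
    (h c : V → ℝ) (hinj : Function.Injective h)
    (ustar : V) (hmax : ∀ v : V, v ≠ ustar → c v < c ustar) :
    ∀ n : ℕ, ∀ u : V, (Finset.univ.filter fun w => h u < h w).card ≤ n →
      h u < h ustar → Relation.TransGen (IsSucc h c) u ustar := by
  intro n
  induction n with
  | zero =>
    intro u hcard hu
    exfalso
    have : ustar ∈ Finset.univ.filter fun w => h u < h w := by simp [hu]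
    have := Finset.card_pos.mpr ⟨ustar, this⟩
    omega
  | succ m ih =>
    intro u hcard hu
    have hune : u ≠ ustar := fun e => absurd (congrArg h e) (ne_of_lt hu)
    have hcu : c u < c ustar := hmax u hune
    set S : Finset V := Finset.univ.filter fun w => h u < h w ∧ c u < c w with hS
    have hus : ustar ∈ S := by simp [hS, hu, hcu]
    obtain ⟨v, hvS, hvmin⟩ := S.exists_min_image h ⟨ustar, hus⟩
    simp only [hS, Finset.mem_filter, Finset.mem_univ, true_and] at hvS
    have hsucc : IsSucc h c u v := ⟨hvS.1, hvS.2, fun w hw1 hw2 =>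
      hvmin w (by simp [hS, hw1, hw2])⟩
    by_cases hveq : v = ustar
    · exact hveq ▸ Relation.TransGen.single hsucc
    · have hvlt : h v < h ustar :=
        lt_of_le_of_ne (hvmin ustar hus) (fun e => hveq (hinj e))
      have hsub : (Finset.univ.filter fun w => h v < h w) ⊂
          (Finset.univ.filter fun w => h u < h w) := by
        constructor
        · intro w hw
          simp only [Finset.mem_filter, Finset.mem_univ, true_and] at hw ⊢
          exact hvS.1.trans hw
        · intro hcon
          have := hcon (by simp [hvS.1] : v ∈ _)
          simp at this
      have := Finset.card_lt_card hsub
      exact Relation.TransGen.head hsucc (ih v (by omega) hvlt)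

lemma pred_eq_succ_neg {V : Type*} (h c : V → ℝ) :
    IsPred h c = IsSucc (fun x => -h x) c := by
  ext v u
  simp only [IsPred, IsSucc, neg_lt_neg_iff, neg_le_neg_iff]

/-- Every node left of the maximum-capacity node `u*` reaches `u*` by
iterating `succ⁺₁` (i.e. `u* ∈ S⁺(u)`); symmetrically every node right of
`u*` reaches `u*` by iterating `pred⁺₁`; hence two nodes on opposite sides of
`u*` are connected in the CONE graph by a path of length at most
`|S⁺(u)| + |P⁺(v)| + 2` through `u*`. -/
theorem chains_reach_max {V : Type*} [Fintype V]
    (h c : V → ℝ) (hinj : Function.Injective h) (cinj : Function.Injective c)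
    (ustar : V) (hmax : ∀ v : V, v ≠ ustar → c v < c ustar) :
    (∀ u : V, h u < h ustar → Relation.TransGen (IsSucc h c) u ustar) ∧
    (∀ v : V, h ustar < h v → Relation.TransGen (IsPred h c) v ustar) ∧
    (∀ u v : V, h u < h ustar → h ustar < h v →
      (coneGraph h c).Reachable u v ∧
      (coneGraph h c).dist u v ≤
        {t | Relation.TransGen (IsSucc h c) u t}.ncard +
          {t | Relation.TransGen (IsPred h c) v t}.ncard + 2) := by
  have part1 : ∀ u : V, h u < h ustar → Relation.TransGen (IsSucc h c) u ustar :=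
    fun u hu => succ_chain_aux h c hinj ustar hmax _ u le_rfl hu
  have part2 : ∀ v : V, h ustar < h v → Relation.TransGen (IsPred h c) v ustar := by
    intro v hv
    rw [pred_eq_succ_neg]
    exact succ_chain_aux (fun x => -h x) c
      (fun a b e => hinj (neg_injective e)) ustar hmax _ v le_rfl (by linarith)
  refine ⟨part1, part2, fun u v hu hv => ?_⟩
  have t1 := part1 u hu
  have t2 := part2 v hv
  have hne1 : u ≠ ustar := fun e => absurd (congrArg h e) (ne_of_lt hu)
  have hne2 : ustar ≠ v := fun e => absurd (congrArg h e) (ne_of_lt hv)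
  have adj1 : (coneGraph h c).Adj u ustar := ⟨hne1, Or.inl t1⟩
  have adj2 : (coneGraph h c).Adj ustar v := ⟨hne2, Or.inr (Or.inr (Or.inr t2))⟩
  let w : (coneGraph h c).Walk u v :=
    SimpleGraph.Walk.cons adj1 (SimpleGraph.Walk.cons adj2 SimpleGraph.Walk.nil)
  have hd : (coneGraph h c).dist u v ≤ 2 := by
    have := SimpleGraph.dist_le w
    simpa [w] using this
  exact ⟨⟨w⟩, by omega⟩
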